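/- Let K be an n×d real matrix with rows K_1,…,K_n and let ε > 0. For v ∈ ℝ^d define LA(K, ε, v) = { j ∈ {1,…,n} : ⟨K_j, v⟩² ≥ ε · Σ_{ℓ=1}^n ⟨K_ℓ, v⟩² }, and let U(K, ε) be the union of LA(K, ε, v) over all v ∈ ℝ^d with Kv ≠ 0. Then U(K, ε) equals the set of indices j such that the leverage score σ_j(K) is at least ε, and moreover |U(K, ε)| ≤ d/ε. -/

import Mathlib

/-- The leverage score of row `j` of an `n × d` real matrix `K`:
`σ_j(K) = sup { ⟨K_j, v⟩² / ∑_ℓ ⟨K_ℓ, v⟩² : v ∈ ℝ^d, Kv ≠ 0 }`. -/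
noncomputable def levScore {n d : ℕ} (K : Matrix (Fin n) (Fin d) ℝ) (j : Fin n) : ℝ :=
  sSup {x : ℝ | ∃ v : Fin d → ℝ, K.mulVec v ≠ 0 ∧
    x = (∑ i, K j i * v i) ^ 2 / ∑ ℓ, (∑ i, K ℓ i * v i) ^ 2}

/-- `LA(K, ε, v)` is the set of rows `j` with `⟨K_j, v⟩² ≥ ε ∑_ℓ ⟨K_ℓ, v⟩²`. -/
def LA {n d : ℕ} (K : Matrix (Fin n) (Fin d) ℝ) (ε : ℝ) (v : Fin d → ℝ) : Set (Fin n) :=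
  {j | ε * ∑ ℓ, (∑ i, K ℓ i * v i) ^ 2 ≤ (∑ i, K j i * v i) ^ 2}

/-- `U(K, ε)` is the union of `LA(K, ε, v)` over all `v` with `Kv ≠ 0`. -/
def USet {n d : ℕ} (K : Matrix (Fin n) (Fin d) ℝ) (ε : ℝ) : Set (Fin n) :=
  ⋃ v ∈ {v : Fin d → ℝ | K.mulVec v ≠ 0}, LA K ε v

open scoped RealInnerProductSpace

noncomputable def Tmap {n d : ℕ} (K : Matrix (Fin n) (Fin d) ℝ) :
    EuclideanSpace ℝ (Fin d) →ₗ[ℝ] EuclideanSpace ℝ (Fin n) :=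
  (WithLp.linearEquiv 2 ℝ (Fin n → ℝ)).symm.toLinearMap ∘ₗ K.mulVecLin ∘ₗ
    (WithLp.linearEquiv 2 ℝ (Fin d → ℝ)).toLinearMap

theorem Tmap_apply {n d : ℕ} (K : Matrix (Fin n) (Fin d) ℝ) (v : EuclideanSpace ℝ (Fin d)) :
    Tmap K v = K.mulVec v := rfl

noncomputable def Vsub {n d : ℕ} (K : Matrix (Fin n) (Fin d) ℝ) :
    Submodule ℝ (EuclideanSpace ℝ (Fin n)) := LinearMap.range (Tmap K)

theorem euc_norm_sq {n : ℕ} (x : EuclideanSpace ℝ (Fin n)) :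
    ‖x‖ ^ 2 = ∑ ℓ, (x ℓ) ^ 2 := by
  rw [← real_inner_self_eq_norm_sq, PiLp.inner_apply]
  simp [sq]

noncomputable def Pscore {n d : ℕ} (K : Matrix (Fin n) (Fin d) ℝ) (j : Fin n) : ℝ :=
  ‖(Submodule.orthogonalProjectionOnto (Vsub K) (EuclideanSpace.single j (1:ℝ)) : EuclideanSpace ℝ (Fin n))‖ ^ 2

theorem inner_e {n : ℕ} (j : Fin n) (x : EuclideanSpace ℝ (Fin n)) :
    ⟪EuclideanSpace.single j (1:ℝ), x⟫ = x j := by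
  simp [EuclideanSpace.inner_single_left]

theorem inner_proj_e {n d : ℕ} (K : Matrix (Fin n) (Fin d) ℝ) (j : Fin n)
    {y : EuclideanSpace ℝ (Fin n)} (hy : y ∈ Vsub K) :
    ⟪(Submodule.orthogonalProjectionOnto (Vsub K) (EuclideanSpace.single j (1:ℝ)) : EuclideanSpace ℝ (Fin n)),
      y⟫ = y j := by
  have h0 := Submodule.starProjection_inner_eq_zero (K := Vsub K)
    (EuclideanSpace.single j (1:ℝ)) y hy
  rw [Submodule.starProjection_apply, inner_sub_left, sub_eq_zero] at h0
  rw [← h0, inner_e]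

theorem ratio_le {n d : ℕ} (K : Matrix (Fin n) (Fin d) ℝ) (j : Fin n)
    {y : EuclideanSpace ℝ (Fin n)} (hy : y ∈ Vsub K) :
    (y j) ^ 2 ≤ Pscore K j * ‖y‖ ^ 2 := by
  rw [← inner_proj_e K j hy]
  set u := (Submodule.orthogonalProjectionOnto (Vsub K) (EuclideanSpace.single j (1:ℝ)) :
    EuclideanSpace ℝ (Fin n))
  have := real_inner_mul_inner_self_le u y
  rw [real_inner_self_eq_norm_sq, real_inner_self_eq_norm_sq] at this
  calc ⟪u, y⟫ ^ 2 = ⟪u, y⟫ * ⟪u, y⟫ := sq ⟪u, y⟫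
    _ ≤ ‖u‖^2 * ‖y‖^2 := this
    _ = Pscore K j * ‖y‖^2 := rfl

theorem attain {n d : ℕ} (K : Matrix (Fin n) (Fin d) ℝ) (hV : Vsub K ≠ ⊥) (j : Fin n) :
    ∃ y : EuclideanSpace ℝ (Fin n), y ∈ Vsub K ∧ y ≠ 0 ∧ (y j) ^ 2 = Pscore K j * ‖y‖ ^ 2 := by
  set u := (Submodule.orthogonalProjectionOnto (Vsub K) (EuclideanSpace.single j (1:ℝ)) :
    EuclideanSpace ℝ (Fin n)) with hu_def
  by_cases hu : u = 0
  · obtain ⟨y, hyV, hy0⟩ := Submodule.ne_bot_iff _ |>.1 hV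
    refine ⟨y, hyV, hy0, ?_⟩
    have h1 : y j = 0 := by rw [← inner_proj_e K j hyV, ← hu_def, hu, inner_zero_left]
    have h2 : Pscore K j = 0 := by simp [Pscore, ← hu_def, hu]
    rw [h1, h2]; ring
  · refine ⟨u, (Submodule.orthogonalProjectionOnto (Vsub K) _).2, hu, ?_⟩
    have h1 : u j = ‖u‖ ^ 2 := by
      have h := inner_proj_e K j
        (show u ∈ Vsub K from (Submodule.orthogonalProjectionOnto (Vsub K) _).2)
      rw [← hu_def] at h
      rw [← h]
      exact real_inner_self_eq_norm_sq u
    rw [h1]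
    have : Pscore K j = ‖u‖ ^ 2 := rfl
    rw [this]; ring

theorem sum_Pscore {n d : ℕ} (K : Matrix (Fin n) (Fin d) ℝ) :
    ∑ j, Pscore K j = (Module.finrank ℝ (Vsub K) : ℝ) := by
  classical
  set b := stdOrthonormalBasis ℝ (Vsub K)
  have hP : ∀ j, Pscore K j = ∑ k, ((b k : EuclideanSpace ℝ (Fin n)) j) ^ 2 := by
    intro j
    set x := Submodule.orthogonalProjectionOnto (Vsub K) (EuclideanSpace.single j (1:ℝ))
    have h1 : Pscore K j = ⟪x, x⟫ := by
      rw [Pscore, ← real_inner_self_eq_norm_sq, ← Submodule.coe_inner]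
    rw [h1, ← b.sum_inner_mul_inner x x]
    refine Finset.sum_congr rfl fun k _ => ?_
    have h2 : ⟪b k, x⟫ = ((b k : EuclideanSpace ℝ (Fin n)) j) := by
      rw [Submodule.inner_orthogonalProjectionOnto_eq_of_mem_left, real_inner_comm, inner_e]
    have h2' : ⟪x, b k⟫ = ((b k : EuclideanSpace ℝ (Fin n)) j) := by
      rw [real_inner_comm]; exact h2
    rw [h2, h2']
    ring
  simp_rw [hP]
  rw [Finset.sum_comm]
  have hbk : ∀ k, ∑ j, ((b k : EuclideanSpace ℝ (Fin n)) j) ^ 2 = 1 := by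
    intro k
    rw [← euc_norm_sq]
    have : ‖(b k : EuclideanSpace ℝ (Fin n))‖ = 1 := b.orthonormal.1 k
    rw [this]; norm_num
  simp_rw [hbk]
  simp [finrank_euclideanSpace_fin]

theorem finrank_Vsub_le {n d : ℕ} (K : Matrix (Fin n) (Fin d) ℝ) :
    Module.finrank ℝ (Vsub K) ≤ d := by
  have := LinearMap.finrank_range_le (Tmap K)
  rwa [finrank_euclideanSpace_fin] at this

theorem Pscore_nonneg {n d : ℕ} (K : Matrix (Fin n) (Fin d) ℝ) (j : Fin n) :
    0 ≤ Pscore K j := pow_nonneg (norm_nonneg _) 2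

theorem mem_USet_iff {n d : ℕ} (K : Matrix (Fin n) (Fin d) ℝ) (ε : ℝ) (j : Fin n) :
    j ∈ USet K ε ↔ ∃ y : EuclideanSpace ℝ (Fin n),
      y ∈ Vsub K ∧ y ≠ 0 ∧ ε * ‖y‖ ^ 2 ≤ (y j) ^ 2 := by
  rw [USet, Set.mem_iUnion₂]
  constructor
  · rintro ⟨v, hv, hla⟩
    refine ⟨(WithLp.equiv 2 _).symm (K.mulVec v), ⟨(WithLp.equiv 2 _).symm v, rfl⟩, ?_, ?_⟩
    · intro h0
      exact hv (congrArg (WithLp.equiv 2 (Fin n → ℝ)) h0)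
    · rw [euc_norm_sq]
      exact hla
  · rintro ⟨y, ⟨v, rfl⟩, hy0, hle⟩
    refine ⟨WithLp.equiv 2 _ v, ?_, ?_⟩
    · intro h0
      exact hy0 (congrArg (WithLp.equiv 2 (Fin n → ℝ)).symm h0)
    · show ε * _ ≤ _
      rw [euc_norm_sq] at hle
      exact hle

theorem mem_levSet_iff {n d : ℕ} (K : Matrix (Fin n) (Fin d) ℝ) (j : Fin n) (x : ℝ) :
    (∃ v : Fin d → ℝ, K.mulVec v ≠ 0 ∧
        x = (∑ i, K j i * v i) ^ 2 / ∑ ℓ, (∑ i, K ℓ i * v i) ^ 2) ↔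
      ∃ y : EuclideanSpace ℝ (Fin n), y ∈ Vsub K ∧ y ≠ 0 ∧ x = (y j) ^ 2 / ‖y‖ ^ 2 := by
  constructor
  · rintro ⟨v, hv, hx⟩
    refine ⟨(WithLp.equiv 2 _).symm (K.mulVec v), ⟨(WithLp.equiv 2 _).symm v, rfl⟩, ?_, ?_⟩
    · intro h0
      exact hv (congrArg (WithLp.equiv 2 (Fin n → ℝ)) h0)
    · rw [euc_norm_sq]
      exact hx
  · rintro ⟨y, ⟨v, rfl⟩, hy0, hx⟩
    refine ⟨WithLp.equiv 2 _ v, ?_, ?_⟩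
    · intro h0
      exact hy0 (congrArg (WithLp.equiv 2 (Fin n → ℝ)).symm h0)
    · show x = _ / _
      rw [euc_norm_sq] at hx
      exact hx

theorem levScore_eq {n d : ℕ} (K : Matrix (Fin n) (Fin d) ℝ) (hV : Vsub K ≠ ⊥) (j : Fin n) :
    levScore K j = Pscore K j := by
  rw [levScore]
  apply le_antisymm
  · apply Real.sSup_le
    · intro x hx
      rw [Set.mem_setOf_eq, mem_levSet_iff] at hx
      obtain ⟨y, hyV, hy0, rfl⟩ := hx
      have hn : 0 < ‖y‖ ^ 2 := by
        have : 0 < ‖y‖ := norm_pos_iff.2 hy0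
        positivity
      rw [div_le_iff₀ hn]
      exact ratio_le K j hyV
    · exact Pscore_nonneg K j
  · apply le_csSup
    · refine ⟨Pscore K j, fun x hx => ?_⟩
      rw [Set.mem_setOf_eq, mem_levSet_iff] at hx
      obtain ⟨y, hyV, hy0, rfl⟩ := hx
      have hn : 0 < ‖y‖ ^ 2 := by
        have : 0 < ‖y‖ := norm_pos_iff.2 hy0
        positivity
      rw [div_le_iff₀ hn]
      exact ratio_le K j hyV
    · rw [Set.mem_setOf_eq, mem_levSet_iff]
      obtain ⟨y, hyV, hy0, heq⟩ := attain K hV j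
      have hn : (‖y‖ : ℝ) ^ 2 ≠ 0 := by
        have : 0 < ‖y‖ := norm_pos_iff.2 hy0
        positivity
      exact ⟨y, hyV, hy0, by rw [heq, mul_div_assoc, div_self hn, mul_one]⟩

theorem levScore_eq_zero {n d : ℕ} (K : Matrix (Fin n) (Fin d) ℝ) (hV : Vsub K = ⊥)
    (j : Fin n) : levScore K j = 0 := by
  have hzero : ∀ v : Fin d → ℝ, K.mulVec v = 0 := by
    intro v
    have hm : Tmap K ((WithLp.equiv 2 (Fin d → ℝ)).symm v) ∈ Vsub K :=
      LinearMap.mem_range_self _ _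
    rw [hV, Submodule.mem_bot] at hm
    exact congrArg (WithLp.equiv 2 (Fin n → ℝ)) hm
  have : {x : ℝ | ∃ v : Fin d → ℝ, K.mulVec v ≠ 0 ∧
      x = (∑ i, K j i * v i) ^ 2 / ∑ ℓ, (∑ i, K ℓ i * v i) ^ 2} = ∅ := by
    ext x
    simp only [Set.mem_setOf_eq, Set.mem_empty_iff_false, iff_false, not_exists]
    rintro v ⟨hv, -⟩
    exact hv (hzero v)
  rw [levScore, this, Real.sSup_empty]

/-- `U(K, ε)` equals the set of rows whose leverage score is at least `ε`, and
`|U(K, ε)| ≤ d/ε`. -/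
theorem USet_eq_large_leverage_and_card_le {n d : ℕ} (K : Matrix (Fin n) (Fin d) ℝ)
    (ε : ℝ) (hε : 0 < ε) :
    USet K ε = {j : Fin n | ε ≤ levScore K j} ∧
      ((USet K ε).ncard : ℝ) ≤ d / ε := by
  classical
  by_cases hV : Vsub K = ⊥
  · have hU : USet K ε = ∅ := by
      ext j
      simp only [Set.mem_empty_iff_false, iff_false]
      intro hj
      obtain ⟨y, hyV, hy0, -⟩ := (mem_USet_iff K ε j).1 hj
      rw [hV, Submodule.mem_bot] at hyV
      exact hy0 hyV
    constructor
    · rw [hU]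
      ext j
      simp only [Set.mem_empty_iff_false, false_iff, Set.mem_setOf_eq,
        levScore_eq_zero K hV, not_le]
      exact hε
    · rw [hU]
      simp only [Set.ncard_empty, Nat.cast_zero]
      positivity
  · have part1 : USet K ε = {j : Fin n | ε ≤ levScore K j} := by
      ext j
      rw [mem_USet_iff, Set.mem_setOf_eq, levScore_eq K hV]
      constructor
      · rintro ⟨y, hyV, hy0, hle⟩
        have hn : 0 < ‖y‖ ^ 2 := by
          have : 0 < ‖y‖ := norm_pos_iff.2 hy0
          positivity
        have h2 := ratio_le K j hyV
        exact le_of_mul_le_mul_right (le_trans hle h2) hn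
      · intro hj
        obtain ⟨y, hyV, hy0, heq⟩ := attain K hV j
        exact ⟨y, hyV, hy0, by rw [heq]; exact mul_le_mul_of_nonneg_right hj (sq_nonneg _)⟩
    refine ⟨part1, ?_⟩
    have hPe : ∀ j ∈ USet K ε, ε ≤ Pscore K j := by
      intro j hj
      rw [part1, Set.mem_setOf_eq, levScore_eq K hV] at hj
      exact hj
    have hcard : ((USet K ε).toFinset.card : ℝ) * ε ≤ ∑ j ∈ (USet K ε).toFinset, Pscore K j := by
      calc ((USet K ε).toFinset.card : ℝ) * ε = ∑ _j ∈ (USet K ε).toFinset, ε := by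
            rw [Finset.sum_const, nsmul_eq_mul]
        _ ≤ ∑ j ∈ (USet K ε).toFinset, Pscore K j :=
            Finset.sum_le_sum fun j hj => hPe j (Set.mem_toFinset.1 hj)
    have hsum : ∑ j ∈ (USet K ε).toFinset, Pscore K j ≤ ∑ j, Pscore K j :=
      Finset.sum_le_sum_of_subset_of_nonneg (Finset.subset_univ _)
        (fun j _ _ => Pscore_nonneg K j)
    have hfin : (∑ j, Pscore K j) ≤ (d : ℝ) := by
      rw [sum_Pscore]
      exact_mod_cast finrank_Vsub_le K
    rw [le_div_iff₀ hε, Set.ncard_eq_toFinset_card']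
    calc ((USet K ε).toFinset.card : ℝ) * ε ≤ ∑ j ∈ (USet K ε).toFinset, Pscore K j := hcard
      _ ≤ ∑ j, Pscore K j := hsum
      _ ≤ d := hfin
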